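/- Let k ≥ 1 and 2^{k-1} < m < 2^k. Then log₂(2^k/m) + ((2^k - m)/m)·log₂(2^k/(2^k - m)) + (2^k/m)·t < 6 for any real t with 0 ≤ t < 2, and the sum is nonnegative. -/

import Mathlib

/-- For `x > 1`, `log₂ (x+1) < x`, i.e. `x + 1 < 2^x`. -/
lemma logb_two_add_one_lt_self {x : ℝ} (hx : 1 < x) : Real.logb 2 (x + 1) < x := by
  have hx1 : (0:ℝ) < x + 1 := by linarith
  rw [Real.logb, div_lt_iff₀ (Real.log_pos one_lt_two), Real.log_lt_iff_lt_exp hx1]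
  have h2 : Real.exp (x * Real.log 2) = 2 * Real.exp ((x - 1) * Real.log 2) := by
    rw [show x * Real.log 2 = Real.log 2 + (x - 1) * Real.log 2 by ring, Real.exp_add,
      Real.exp_log (by norm_num : (0:ℝ) < 2)]
  rw [h2]
  have h3 := Real.add_one_le_exp ((x - 1) * Real.log 2)
  have hl : (0.6931471803:ℝ) < Real.log 2 := Real.log_two_gt_d9
  nlinarith [mul_pos (by linarith : (0:ℝ) < x - 1) (by linarith : (0:ℝ) < 2 * Real.log 2 - 1)]

/-- total entropy gap bound for FLDR: for `k ≥ 1`, `2^{k-1} < m < 2^k`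
and `0 ≤ t < 2`, the gap
`log₂(2^k/m) + ((2^k-m)/m)·log₂(2^k/(2^k-m)) + (2^k/m)·t` is nonnegative and `< 6`. -/
theorem stmt_14 (k m : ℕ) (hk : 1 ≤ k) (h₁ : 2 ^ (k - 1) < m) (h₂ : m < 2 ^ k)
    (t : ℝ) (ht₀ : 0 ≤ t) (ht₂ : t < 2) :
    0 ≤ Real.logb 2 ((2 : ℝ) ^ k / m) +
        (((2 : ℝ) ^ k - m) / m) * Real.logb 2 ((2 : ℝ) ^ k / ((2 : ℝ) ^ k - m)) +
        ((2 : ℝ) ^ k / m) * t ∧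
    Real.logb 2 ((2 : ℝ) ^ k / m) +
        (((2 : ℝ) ^ k - m) / m) * Real.logb 2 ((2 : ℝ) ^ k / ((2 : ℝ) ^ k - m)) +
        ((2 : ℝ) ^ k / m) * t < 6 := by
  obtain ⟨j, rfl⟩ : ∃ j, k = j + 1 := ⟨k - 1, (Nat.succ_pred_eq_of_pos hk).symm⟩
  simp only [Nat.add_sub_cancel] at h₁
  have hm1 : (2:ℝ) ^ j < (m:ℝ) := by exact_mod_cast h₁
  have hm0 : (0:ℝ) < (m:ℝ) := lt_trans (by positivity) hm1
  set M : ℝ := (2:ℝ) ^ (j + 1) with hMdef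
  have hM0 : (0:ℝ) < M := by positivity
  have hmM : (m:ℝ) < M := by rw [hMdef]; exact_mod_cast h₂
  have hM2m : M < 2 * (m:ℝ) := by
    have : M = 2 * (2:ℝ) ^ j := by rw [hMdef]; ring
    linarith
  set s : ℝ := M - (m:ℝ) with hsdef
  have hs0 : (0:ℝ) < s := by simp [hsdef]; linarith
  have hsm : s < (m:ℝ) := by simp [hsdef]; linarith
  -- Term A
  have hA0 : 0 ≤ Real.logb 2 (M / m) :=
    Real.logb_nonneg one_lt_two ((one_le_div hm0).2 hmM.le)
  have hA1 : Real.logb 2 (M / m) < 1 := by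
    have h : M / m < 2 := (div_lt_iff₀ hm0).2 (by linarith)
    calc Real.logb 2 (M / m) < Real.logb 2 2 :=
          Real.logb_lt_logb (by norm_num) (by positivity) h
      _ = 1 := Real.logb_self_eq_one (by norm_num)
  -- Term B
  have hx1 : (1:ℝ) < (m:ℝ) / s := (lt_div_iff₀ hs0).2 (by linarith)
  have hMs : M / s = (m:ℝ) / s + 1 := by field_simp [hsdef]; linarith
  have hB0 : 0 ≤ s / m * Real.logb 2 (M / s) := by
    apply mul_nonneg (by positivity)
    exact Real.logb_nonneg one_lt_two ((one_le_div hs0).2 (by linarith))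
  have hB1 : s / m * Real.logb 2 (M / s) < 1 := by
    have hlog : Real.logb 2 (M / s) < (m:ℝ) / s := by
      rw [hMs]; exact logb_two_add_one_lt_self hx1
    have h5 : s / m * Real.logb 2 (M / s) < s / m * ((m:ℝ) / s) :=
      mul_lt_mul_of_pos_left hlog (by positivity)
    have h6 : s / m * ((m:ℝ) / s) = 1 := by field_simp
    linarith
  -- Term C
  have hC0 : 0 ≤ M / m * t := mul_nonneg (by positivity) ht₀
  have hC1 : M / m * t < 4 := by
    have h7 : M / m ≤ 2 := by
      rw [div_le_iff₀ hm0]; linarith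
    have := mul_le_mul_of_nonneg_right h7 ht₀
    linarith
  constructor <;> linarith
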